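/- Let $N \ge 2$ and $\gamma \le 1$, and let $\alpha < \frac{1}{4} - (1-\gamma)^2$ with $\alpha \le 1/4$; set $\delta_\alpha = (\sqrt{1-4\alpha}-1)/2$ and $u_\alpha(x) = |x|^{(2-N)/2}|\log|x||^{-\delta_\alpha}$. Then for every $R \in (0,1)$, $\int_{B_R} |x|^{-2}|\log|x||^{-2\gamma}|u_\alpha(x)|^2\,dx < \infty$, whereas if $\alpha \ge \frac14 - (1-\gamma)^2$ this integral is infinite. -/

import Mathlib

open MeasureTheory Set Metric
open scoped ENNReal

section Aux

lemma radial_lintegral {N : ℕ} (hN : 2 ≤ N) (H : ℝ → ℝ≥0∞) (hH : Measurable H) :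
    ∫⁻ x : EuclideanSpace ℝ (Fin N), H ‖x‖ =
      (volume : Measure (EuclideanSpace ℝ (Fin N))).toSphere univ *
        ∫⁻ r in Ioi (0 : ℝ), ENNReal.ofReal (r ^ (N - 1)) * H r := by
  have hfr : Module.finrank ℝ (EuclideanSpace ℝ (Fin N)) = N := finrank_euclideanSpace_fin
  haveI : Nontrivial (EuclideanSpace ℝ (Fin N)) :=
    Module.nontrivial_of_finrank_pos (R := ℝ) (by rw [hfr]; omega)
  set μ : Measure (EuclideanSpace ℝ (Fin N)) := volume with hμ
  calc
    ∫⁻ x, H ‖x‖ ∂μ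
        = ∫⁻ x in ({0}ᶜ : Set (EuclideanSpace ℝ (Fin N))), H ‖x‖ ∂μ := by
          rw [restrict_compl_singleton]
    _ = ∫⁻ x : ({0}ᶜ : Set (EuclideanSpace ℝ (Fin N))),
          H ‖(x : EuclideanSpace ℝ (Fin N))‖ ∂(μ.comap (↑)) :=
        (lintegral_subtype_comap (measurableSet_singleton 0).compl _).symm
    _ = ∫⁻ p : sphere (0 : EuclideanSpace ℝ (Fin N)) 1 × Ioi (0 : ℝ), H p.2
          ∂(μ.toSphere.prod (.volumeIoiPow (Module.finrank ℝ (EuclideanSpace ℝ (Fin N)) - 1))) := by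
        rw [← μ.measurePreserving_homeomorphUnitSphereProd.lintegral_comp
          (f := fun p : sphere (0 : EuclideanSpace ℝ (Fin N)) 1 × Ioi (0 : ℝ) => H p.2)
          (hH.comp (measurable_subtype_coe.comp measurable_snd))]
        exact lintegral_congr fun x => by simp
    _ = μ.toSphere univ * ∫⁻ r : Ioi (0 : ℝ), H r
          ∂(Measure.volumeIoiPow (N - 1)) := by
        rw [hfr, lintegral_prod (fun p : sphere (0 : EuclideanSpace ℝ (Fin N)) 1 × Ioi (0 : ℝ) => H p.2)
          ((hH.comp (measurable_subtype_coe.comp measurable_snd)).aemeasurable)]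
        simp [lintegral_const, mul_comm]
    _ = μ.toSphere univ * ∫⁻ r in Ioi (0 : ℝ), ENNReal.ofReal (r ^ (N - 1)) * H r := by
        congr 1
        rw [Measure.volumeIoiPow,
          lintegral_withDensity_eq_lintegral_mul _
            (by fun_prop : Measurable fun r : Ioi (0:ℝ) => ENNReal.ofReal ((r : ℝ) ^ (N - 1)))
            (g := fun r : Ioi (0:ℝ) => H ↑r) (hH.comp measurable_subtype_coe)]
        simp only [Pi.mul_apply]
        exact lintegral_subtype_comap measurableSet_Ioi
          (fun r : ℝ => ENNReal.ofReal (r ^ (N - 1)) * H r)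

lemma radial_integrable {N : ℕ} (hN : 2 ≤ N) {R : ℝ} (hR : 0 < R) {F : ℝ → ℝ}
    (hF : Measurable F) (hF0 : ∀ r ∈ Ioo (0 : ℝ) R, 0 ≤ F r) :
    IntegrableOn (fun x : EuclideanSpace ℝ (Fin N) => F ‖x‖)
        (ball (0 : EuclideanSpace ℝ (Fin N)) R \ {0}) volume ↔
      IntegrableOn (fun r : ℝ => r ^ (N - 1) * F r) (Ioo 0 R) volume := by
  set E := EuclideanSpace ℝ (Fin N)
  have hmem : ∀ x : E, x ∈ ball (0 : E) R \ {0} ↔ ‖x‖ ∈ Ioo (0 : ℝ) R := by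
    intro x
    simp [mem_ball_zero_iff, norm_pos_iff, and_comm]
    exact ⟨fun h => ⟨norm_pos_iff.2 h.2, h.1⟩, fun h => ⟨h.2, norm_pos_iff.1 h.1⟩⟩
  have hs : MeasurableSet (ball (0 : E) R \ {0}) :=
    measurableSet_ball.diff (measurableSet_singleton _)
  have hL : IntegrableOn (fun x : E => F ‖x‖) (ball (0 : E) R \ {0}) volume ↔
      (∫⁻ x in ball (0 : E) R \ {0}, ENNReal.ofReal (F ‖x‖)) < ⊤ := by
    rw [IntegrableOn, ← hasFiniteIntegral_iff_ofReal
      (ae_restrict_of_forall_mem hs fun x hx => hF0 _ ((hmem x).1 hx))]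
    exact ⟨fun h => h.2, fun h => ⟨((hF.comp measurable_norm).aestronglyMeasurable).restrict, h⟩⟩
  have hR' : IntegrableOn (fun r : ℝ => r ^ (N - 1) * F r) (Ioo 0 R) volume ↔
      (∫⁻ r in Ioo (0 : ℝ) R, ENNReal.ofReal (r ^ (N - 1) * F r)) < ⊤ := by
    rw [IntegrableOn, ← hasFiniteIntegral_iff_ofReal
      (ae_restrict_of_forall_mem measurableSet_Ioo fun r hr =>
        mul_nonneg (pow_nonneg hr.1.le _) (hF0 r hr))]
    exact ⟨fun h => h.2, fun h =>
      ⟨(((measurable_id.pow_const _).mul hF).aestronglyMeasurable).restrict, h⟩⟩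
  rw [hL, hR']
  set H : ℝ → ℝ≥0∞ := (Ioo (0 : ℝ) R).indicator fun r => ENNReal.ofReal (F r) with hHdef
  have hHmeas : Measurable H :=
    (ENNReal.measurable_ofReal.comp hF).indicator measurableSet_Ioo
  have e1 : (∫⁻ x in ball (0 : E) R \ {0}, ENNReal.ofReal (F ‖x‖)) = ∫⁻ x : E, H ‖x‖ := by
    rw [← lintegral_indicator hs]
    refine lintegral_congr fun x => ?_
    by_cases hx : x ∈ ball (0 : E) R \ {0}
    · rw [indicator_of_mem hx, hHdef, indicator_of_mem ((hmem x).1 hx)]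
    · rw [indicator_of_notMem hx, hHdef,
        indicator_of_notMem (fun h => hx ((hmem x).2 h))]
  have e2 : (∫⁻ r in Ioi (0 : ℝ), ENNReal.ofReal (r ^ (N - 1)) * H r)
      = ∫⁻ r in Ioo (0 : ℝ) R, ENNReal.ofReal (r ^ (N - 1) * F r) := by
    have hpt : ∀ r : ℝ, ENNReal.ofReal (r ^ (N - 1)) * H r
        = (Ioo (0 : ℝ) R).indicator (fun r => ENNReal.ofReal (r ^ (N - 1) * F r)) r := by
      intro r
      by_cases hr : r ∈ Ioo (0 : ℝ) R
      · rw [hHdef, indicator_of_mem hr, indicator_of_mem hr,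
          ENNReal.ofReal_mul (pow_nonneg hr.1.le _)]
      · rw [hHdef, indicator_of_notMem hr, indicator_of_notMem hr, mul_zero]
    simp_rw [hpt]
    rw [lintegral_indicator measurableSet_Ioo, Measure.restrict_restrict measurableSet_Ioo,
      inter_eq_left.mpr fun r hr => hr.1]
  rw [e1, radial_lintegral hN H hHmeas, e2]
  have hfr : Module.finrank ℝ E = N := finrank_euclideanSpace_fin
  haveI : Nontrivial E := Module.nontrivial_of_finrank_pos (R := ℝ) (by rw [hfr]; omega)
  have hC0 : (volume : Measure E).toSphere univ ≠ 0 := by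
    rw [Measure.toSphere_apply_univ, hfr]
    exact mul_ne_zero (Nat.cast_ne_zero.mpr (by omega)) (measure_ball_pos _ _ one_pos).ne'
  have hCt : (volume : Measure E).toSphere univ ≠ ⊤ := measure_ne_top _ _
  rw [lt_top_iff_ne_top, lt_top_iff_ne_top]
  constructor
  · exact fun h ht => h (ENNReal.mul_eq_top.2 (Or.inl ⟨hC0, ht⟩))
  · exact fun ht => ENNReal.mul_ne_top hCt ht

lemma one_dim_log_integrable {R : ℝ} (hR0 : 0 < R) (hR1 : R < 1) (q : ℝ) :
    IntegrableOn (fun r : ℝ => r⁻¹ * (-Real.log r) ^ (-q)) (Ioo 0 R) volume ↔ 1 < q := by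
  have hlogR : 0 < -Real.log R := by
    rw [neg_pos]; exact Real.log_neg hR0 hR1
  have himg : (fun t : ℝ => Real.exp (-t)) '' Ioi (-Real.log R) = Ioo 0 R := by
    ext y
    constructor
    · rintro ⟨t, ht, rfl⟩
      refine ⟨Real.exp_pos _, ?_⟩
      rw [← Real.exp_log hR0]
      exact Real.exp_lt_exp.2 (by have := mem_Ioi.1 ht; linarith)
    · intro hy
      refine ⟨-Real.log y, ?_, by simp [Real.exp_log hy.1]⟩
      exact mem_Ioi.2 (neg_lt_neg (Real.log_lt_log hy.1 hy.2))
  have hderiv : ∀ t ∈ Ioi (-Real.log R),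
      HasDerivWithinAt (fun t : ℝ => Real.exp (-t)) (-Real.exp (-t)) (Ioi (-Real.log R)) t := by
    intro t _
    simpa [Function.comp_def] using ((Real.hasDerivAt_exp (-t)).comp t (hasDerivAt_neg t)).hasDerivWithinAt
  have hinj : InjOn (fun t : ℝ => Real.exp (-t)) (Ioi (-Real.log R)) := by
    intro a _ b _ h
    exact neg_injective (Real.exp_injective h)
  rw [← himg, integrableOn_image_iff_integrableOn_abs_deriv_smul measurableSet_Ioi hderiv hinj]
  have heq : EqOn
      (fun t : ℝ => |(-Real.exp (-t))| •
        ((Real.exp (-t))⁻¹ * (-Real.log (Real.exp (-t))) ^ (-q)))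
      (fun t : ℝ => t ^ (-q)) (Ioi (-Real.log R)) := by
    intro t _
    simp only [smul_eq_mul, abs_neg, abs_of_pos (Real.exp_pos _), Real.log_exp, neg_neg]
    rw [← mul_assoc, mul_inv_cancel₀ (Real.exp_ne_zero _), one_mul]
  rw [integrableOn_congr_fun heq measurableSet_Ioi, integrableOn_Ioi_rpow_iff hlogR]
  constructor <;> intro <;> linarith

end Aux

/-- Weighted integrability threshold for the explicit solution
`u_α(x) = |x|^{(2-N)/2}|log|x||^{-δ_α}`: the weighted `L²` norm on a ball `B_R`,
`R < 1`, is finite precisely when `α < 1/4 - (1-γ)²`. -/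
theorem explicit_solution_integrability {N : ℕ} (hN : 2 ≤ N) (γ α : ℝ)
    (hγ : γ ≤ 1) (hα : α ≤ 1 / 4)
    (δ : ℝ) (hδ : δ = (Real.sqrt (1 - 4 * α) - 1) / 2)
    (u : EuclideanSpace ℝ (Fin N) → ℝ)
    (hu : ∀ x, u x = ‖x‖ ^ ((2 - (N : ℝ)) / 2) * (-Real.log ‖x‖) ^ (-δ))
    (R : ℝ) (hR0 : 0 < R) (hR1 : R < 1) :
    IntegrableOn
        (fun x => (‖x‖ ^ 2)⁻¹ * (-Real.log ‖x‖) ^ (-2 * γ) * (u x) ^ 2)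
        (ball (0 : EuclideanSpace ℝ (Fin N)) R \ {0}) volume ↔
      α < 1 / 4 - (1 - γ) ^ 2 := by
  set F : ℝ → ℝ := fun r =>
    (r ^ 2)⁻¹ * (-Real.log r) ^ (-2 * γ) *
      (r ^ ((2 - (N : ℝ)) / 2) * (-Real.log r) ^ (-δ)) ^ 2 with hFdef
  have hfun : (fun x : EuclideanSpace ℝ (Fin N) =>
      (‖x‖ ^ 2)⁻¹ * (-Real.log ‖x‖) ^ (-2 * γ) * (u x) ^ 2) = fun x => F ‖x‖ := by
    funext x; rw [hu x]
  have hFmeas : Measurable F := by measurability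
  have hF0 : ∀ r ∈ Ioo (0 : ℝ) R, 0 ≤ F r := by
    intro r hr
    have h1 : (0 : ℝ) ≤ -Real.log r :=
      neg_nonneg.2 (Real.log_nonpos hr.1.le (hr.2.trans hR1).le)
    exact mul_nonneg (mul_nonneg (inv_nonneg.2 (sq_nonneg r))
      (Real.rpow_nonneg h1 _)) (sq_nonneg _)
  rw [hfun, radial_integrable hN hR0 hFmeas hF0]
  set q : ℝ := 2 * γ + 2 * δ with hqdef
  have heq : EqOn (fun r : ℝ => r ^ (N - 1) * F r)
      (fun r : ℝ => r⁻¹ * (-Real.log r) ^ (-q)) (Ioo 0 R) := by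
    intro r hr
    have hr0 : (0 : ℝ) < r := hr.1
    have hlog : (0 : ℝ) < -Real.log r := neg_pos.2 (Real.log_neg hr0 (hr.2.trans hR1))
    have e1 : (r : ℝ) ^ (N - 1) = r ^ ((N : ℝ) - 1) := by
      rw [← Real.rpow_natCast r (N - 1), Nat.cast_sub (by omega), Nat.cast_one]
    have e2 : ((r : ℝ) ^ 2)⁻¹ = r ^ (-2 : ℝ) := by
      rw [← Real.rpow_natCast r 2, ← Real.rpow_neg hr0.le]
      norm_num
    have e3 : (r ^ ((2 - (N : ℝ)) / 2)) ^ 2 = r ^ (2 - (N : ℝ)) := by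
      rw [← Real.rpow_natCast (r ^ ((2 - (N : ℝ)) / 2)) 2, ← Real.rpow_mul hr0.le]
      norm_num
    have e4 : ((-Real.log r) ^ (-δ)) ^ 2 = (-Real.log r) ^ (-(2 * δ)) := by
      rw [← Real.rpow_natCast ((-Real.log r) ^ (-δ)) 2, ← Real.rpow_mul hlog.le]
      norm_num; ring_nf
    show r ^ (N - 1) * F r = r⁻¹ * (-Real.log r) ^ (-q)
    rw [hFdef]
    simp only []
    rw [mul_pow, e1, e2, e3, e4]
    calc r ^ ((N : ℝ) - 1) *
          (r ^ (-2 : ℝ) * (-Real.log r) ^ (-2 * γ) *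
            (r ^ (2 - (N : ℝ)) * (-Real.log r) ^ (-(2 * δ))))
        = (r ^ ((N : ℝ) - 1) * r ^ (-2 : ℝ) * r ^ (2 - (N : ℝ))) *
            ((-Real.log r) ^ (-2 * γ) * (-Real.log r) ^ (-(2 * δ))) := by ring
      _ = r ^ (((N : ℝ) - 1) + (-2 : ℝ) + (2 - (N : ℝ))) *
            (-Real.log r) ^ ((-2 * γ) + (-(2 * δ))) := by
          rw [← Real.rpow_add hr0, ← Real.rpow_add hr0, ← Real.rpow_add hlog]
      _ = r⁻¹ * (-Real.log r) ^ (-q) := by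
          rw [show ((N : ℝ) - 1) + (-2 : ℝ) + (2 - (N : ℝ)) = -1 by ring,
            Real.rpow_neg_one, show (-2 * γ) + (-(2 * δ)) = -q by rw [hqdef]; ring]
  rw [integrableOn_congr_fun heq measurableSet_Ioo, one_dim_log_integrable hR0 hR1 q]
  have h4 : (0 : ℝ) ≤ 1 - 4 * α := by linarith
  have h2γ : (0 : ℝ) ≤ 2 - 2 * γ := by linarith
  rw [hqdef, hδ]
  constructor
  · intro h
    have hlt : 2 - 2 * γ < Real.sqrt (1 - 4 * α) := by linarith
    have := (Real.lt_sqrt h2γ).1 hlt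
    nlinarith
  · intro h
    have : (2 - 2 * γ) ^ 2 < 1 - 4 * α := by nlinarith
    have := (Real.lt_sqrt h2γ).2 this
    linarith
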